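/- Let f : F_2^n → {0,1} satisfy f̂(0) = 1/2^{k−1}, and suppose every other Fourier coefficient is 0 or ±1/2^k. Define A = {α : f̂(α) = 1/2^k} and B = {β : f̂(β) = −1/2^k}. Then |A| = 3(2^{k−1}−1) and |B| = 2^{k−1}−1. -/

import Mathlib

open Finset

lemma neg_one_pow_mod_two (m : ℕ) : (-1:ℝ)^(m % 2) = (-1)^m := by
  conv_rhs => rw [← Nat.div_add_mod m 2]
  rw [pow_add, pow_mul]; norm_num

lemma chi_add (a b : ZMod 2) : (-1:ℝ)^((a+b).val) = (-1)^a.val * (-1)^b.val := by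
  rw [ZMod.val_add, neg_one_pow_mod_two, pow_add]

lemma chi_one (a : ZMod 2) : (-1:ℝ)^((a+1).val) = -((-1)^a.val) := by
  rw [chi_add, show ((1:ZMod 2)).val = 1 from rfl]; ring

lemma sum_chi {n : ℕ} (x : Fin n → ZMod 2) (hx : x ≠ 0) :
    ∑ α : Fin n → ZMod 2, (-1:ℝ)^((∑ i, α i * x i).val) = 0 := by
  set F : (Fin n → ZMod 2) → ℝ := fun α => (-1:ℝ)^((∑ i, α i * x i).val) with hF
  obtain ⟨j, hj⟩ : ∃ j, x j ≠ 0 := by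
    by_contra hc; push_neg at hc; exact hx (funext hc)
  have hj1 : x j = 1 := by
    have : ∀ a : ZMod 2, a ≠ 0 → a = 1 := by decide
    exact this _ hj
  set e : Fin n → ZMod 2 := fun i => if i = j then 1 else 0 with he
  have key : ∀ α : Fin n → ZMod 2, F (α + e) = -(F α) := by
    intro α
    have hsum : (∑ i, (α + e) i * x i) = (∑ i, α i * x i) + 1 := by
      simp only [Pi.add_apply, add_mul, Finset.sum_add_distrib]
      congr 1
      rw [Finset.sum_eq_single j]
      · simp [he, hj1]
      · intro i _ hij; simp [he, hij]
      · simp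
    rw [hF]; simp only [hsum]; exact chi_one _
  have h1 : ∑ α, F (α + e) = ∑ α, F α := Equiv.sum_comp (Equiv.addRight e) F
  have h2 : ∑ α, F (α + e) = -∑ α, F α := by
    rw [← Finset.sum_neg_distrib]
    exact Finset.sum_congr rfl fun α _ => key α
  linarith [h1, h2]

/-- The Fourier coefficient `f̂(α) = E_x[f(x)·(-1)^⟨α,x⟩]` of `f : F_2^n → ℝ`. -/
noncomputable def fc {n : ℕ} (f : (Fin n → ZMod 2) → ℝ) (α : Fin n → ZMod 2) : ℝ :=
  (∑ x : Fin n → ZMod 2, f x * (-1 : ℝ) ^ (∑ i, α i * x i : ZMod 2).val) / 2 ^ n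

lemma sum_chi' {n : ℕ} (x : Fin n → ZMod 2) :
    ∑ α : Fin n → ZMod 2, (-1:ℝ)^((∑ i, α i * x i).val) = if x = 0 then (2^n : ℝ) else 0 := by
  split_ifs with hx
  · subst hx
    simp [ZMod.val_zero, Fintype.card_fun]
  · exact sum_chi x hx

lemma inversion {n : ℕ} (f : (Fin n → ZMod 2) → ℝ) :
    ∑ α : Fin n → ZMod 2, fc f α = f 0 := by
  unfold fc
  rw [← Finset.sum_div, Finset.sum_comm]
  have : ∀ x : Fin n → ZMod 2,
      ∑ α : Fin n → ZMod 2, f x * (-1:ℝ)^((∑ i, α i * x i).val)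
        = f x * (if x = 0 then (2^n:ℝ) else 0) := by
    intro x; rw [← Finset.mul_sum, sum_chi' x]
  rw [Finset.sum_congr rfl fun x _ => this x]
  simp only [mul_ite, mul_zero]
  rw [Finset.sum_ite_eq' Finset.univ (0 : Fin n → ZMod 2) (fun x => f x * (2^n:ℝ))]
  simp only [Finset.mem_univ, if_true]
  rw [mul_div_assoc, div_self (by positivity), mul_one]


lemma parseval {n : ℕ} (f : (Fin n → ZMod 2) → ℝ) :
    ∑ α : Fin n → ZMod 2, (fc f α)^2 = (∑ x, f x * f x) / 2^n := by
  have step1 : ∀ α : Fin n → ZMod 2, (fc f α)^2 =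
      (∑ x : Fin n → ZMod 2, ∑ y : Fin n → ZMod 2,
        f x * f y * (-1:ℝ)^((∑ i, α i * (x i + y i)).val)) / (2^n * 2^n) := by
    intro α
    unfold fc
    rw [pow_two, div_mul_div_comm, Finset.sum_mul_sum]
    congr 1
    refine Finset.sum_congr rfl fun x _ => Finset.sum_congr rfl fun y _ => ?_
    have : (∑ i, α i * (x i + y i)) = (∑ i, α i * x i) + (∑ i, α i * y i) := by
      simp [mul_add, Finset.sum_add_distrib]
    rw [this, chi_add]; ring
  rw [Finset.sum_congr rfl fun α _ => step1 α, ← Finset.sum_div, Finset.sum_comm]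
  have step2 : ∀ x : Fin n → ZMod 2,
      ∑ α : Fin n → ZMod 2, ∑ y : Fin n → ZMod 2,
        f x * f y * (-1:ℝ)^((∑ i, α i * (x i + y i)).val)
      = f x * f x * 2^n := by
    intro x
    rw [Finset.sum_comm]
    have inner : ∀ y : Fin n → ZMod 2,
        ∑ α : Fin n → ZMod 2, f x * f y * (-1:ℝ)^((∑ i, α i * (x i + y i)).val)
        = f x * f y * (if x + y = 0 then (2^n:ℝ) else 0) := by
      intro y
      rw [← Finset.mul_sum]
      congr 1
      exact sum_chi' (x + y)
    rw [Finset.sum_congr rfl fun y _ => inner y]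
    rw [Finset.sum_eq_single x]
    · have : x + x = 0 := by
        funext i
        have : ∀ a : ZMod 2, a + a = 0 := by decide
        exact this (x i)
      simp [this]
    · intro y _ hyx
      have : x + y ≠ 0 := by
        intro hc
        apply hyx
        funext i
        have h2 : ∀ a b : ZMod 2, a + b = 0 → b = a := by decide
        exact h2 (x i) (y i) (congrFun hc i)
      simp [this]
    · simp
  rw [Finset.sum_congr rfl fun x _ => step2 x]
  have h2n : (2:ℝ)^n ≠ 0 := by positivity
  rw [← Finset.sum_mul]
  field_simp

theorem stmt_5 {n k : ℕ} (hk : 1 ≤ k) (hn : k ≤ n) (f : (Fin n → ZMod 2) → ℝ)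
    (hf : ∀ x, f x = 0 ∨ f x = 1) (hf0 : f 0 = 1)
    (h0 : fc f 0 = 1 / 2 ^ (k - 1))
    (h : ∀ α : Fin n → ZMod 2, α ≠ 0 →
      fc f α = 0 ∨ fc f α = 1 / 2 ^ k ∨ fc f α = -(1 / 2 ^ k)) :
    {α : Fin n → ZMod 2 | fc f α = 1 / 2 ^ k}.ncard = 3 * (2 ^ (k - 1) - 1) ∧
    {β : Fin n → ZMod 2 | fc f β = -(1 / 2 ^ k)}.ncard = 2 ^ (k - 1) - 1 := by
  classical
  set D : ℝ := 2 ^ (k - 1) with hD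
  have hD1 : (1:ℝ) ≤ D := one_le_pow₀ (by norm_num)
  have hDpos : (0:ℝ) < D := by linarith
  set c : ℝ := 1 / 2 ^ k with hc
  have h2k : (2:ℝ)^k = 2 * D := by
    rw [hD, ← pow_succ']
    congr 1
    omega
  have hcD : c = 1 / (2 * D) := by rw [hc, h2k]
  have hcpos : 0 < c := by rw [hcD]; positivity
  set A : Finset (Fin n → ZMod 2) := Finset.univ.filter (fun α => fc f α = c) with hA
  set B : Finset (Fin n → ZMod 2) := Finset.univ.filter (fun β => fc f β = -c) with hB
  have hfc0 : fc f 0 = 1 / D := h0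
  have h0A : (0 : Fin n → ZMod 2) ∉ A := by
    simp only [hA, Finset.mem_filter, Finset.mem_univ, true_and]
    rw [hfc0, hcD]
    intro hcon
    rw [div_eq_div_iff (by linarith) (by linarith)] at hcon
    linarith
  have h0B : (0 : Fin n → ZMod 2) ∉ B := by
    simp only [hB, Finset.mem_filter, Finset.mem_univ, true_and]
    rw [hfc0]
    intro hcon
    have : (0:ℝ) < 1 / D := by positivity
    linarith
  -- decomposition of fc on nonzero α
  have hdecomp : ∀ α : Fin n → ZMod 2, α ∈ Finset.univ.erase 0 →
      fc f α = (if α ∈ A then c else 0) + (if α ∈ B then -c else 0) := by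
    intro α hα
    have hα0 : α ≠ 0 := (Finset.mem_erase.mp hα).1
    have hAB : ¬ (fc f α = c ∧ fc f α = -c) := by
      rintro ⟨h1, h2⟩; rw [h1] at h2; linarith
    simp only [hA, hB, Finset.mem_filter, Finset.mem_univ, true_and]
    rcases h α hα0 with h1 | h1 | h1 <;> rw [h1] <;> split_ifs with p q <;>
      first
      | linarith
      | nlinarith
      | exact absurd rfl p
      | (rename_i q2; exact absurd rfl q2)
  have hdecompsq : ∀ α : Fin n → ZMod 2, α ∈ Finset.univ.erase 0 →
      (fc f α)^2 = (if α ∈ A then c^2 else 0) + (if α ∈ B then c^2 else 0) := by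
    intro α hα
    have hα0 : α ≠ 0 := (Finset.mem_erase.mp hα).1
    have hAB : ¬ (fc f α = c ∧ fc f α = -c) := by
      rintro ⟨h1, h2⟩; rw [h1] at h2; linarith
    simp only [hA, hB, Finset.mem_filter, Finset.mem_univ, true_and]
    rcases h α hα0 with h1 | h1 | h1 <;> rw [h1] <;> split_ifs with p q <;>
      first
      | linarith
      | nlinarith
      | exact absurd rfl p
      | (rename_i q2; exact absurd rfl q2)
  have hAerase : (Finset.univ.erase (0 : Fin n → ZMod 2)) ∩ A = A := by
    ext α
    simp only [Finset.mem_inter, Finset.mem_erase, Finset.mem_univ, and_true, true_and]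
    constructor
    · rintro ⟨_, hα⟩; exact hα
    · intro hα; exact ⟨fun hc0 => h0A (hc0 ▸ hα), hα⟩
  have hBerase : (Finset.univ.erase (0 : Fin n → ZMod 2)) ∩ B = B := by
    ext α
    simp only [Finset.mem_inter, Finset.mem_erase, Finset.mem_univ, and_true, true_and]
    constructor
    · rintro ⟨_, hα⟩; exact hα
    · intro hα; exact ⟨fun hc0 => h0B (hc0 ▸ hα), hα⟩
  set a : ℕ := A.card with ha
  set b : ℕ := B.card with hb
  -- Equation 1 (inversion):
  have E1 : (1:ℝ) = 1 / D + c * a - c * b := by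
    have hinv := inversion f
    rw [hf0] at hinv
    rw [← Finset.add_sum_erase _ _ (Finset.mem_univ 0)] at hinv
    rw [Finset.sum_congr rfl hdecomp] at hinv
    rw [Finset.sum_add_distrib, Finset.sum_ite_mem, Finset.sum_ite_mem,
        hAerase, hBerase, Finset.sum_const, Finset.sum_const] at hinv
    rw [hfc0] at hinv
    rw [nsmul_eq_mul, nsmul_eq_mul, ← ha, ← hb] at hinv
    linarith [hinv]
  -- Equation 2 (Parseval):
  have E2 : (1:ℝ) / D = (1 / D)^2 + c^2 * a + c^2 * b := by
    have hpar := parseval f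
    have hff : (∑ x, f x * f x) = ∑ x, f x := by
      refine Finset.sum_congr rfl fun x _ => ?_
      rcases hf x with h1 | h1 <;> rw [h1] <;> ring
    have hfc0' : fc f 0 = (∑ x, f x) / 2^n := by
      unfold fc
      congr 1
      refine Finset.sum_congr rfl fun x _ => ?_
      have : (∑ i, (0 : Fin n → ZMod 2) i * x i) = 0 := by simp
      rw [this, ZMod.val_zero, pow_zero, mul_one]
    rw [hff, ← hfc0', hfc0] at hpar
    rw [← Finset.add_sum_erase _ _ (Finset.mem_univ 0)] at hpar
    rw [Finset.sum_congr rfl hdecompsq] at hpar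
    rw [Finset.sum_add_distrib, Finset.sum_ite_mem, Finset.sum_ite_mem,
        hAerase, hBerase, Finset.sum_const, Finset.sum_const] at hpar
    rw [hfc0] at hpar
    rw [nsmul_eq_mul, nsmul_eq_mul, ← ha, ← hb] at hpar
    linarith [hpar]
  -- Solve: a = 3D - 3, b = D - 1
  have hc2 : c * (2 * D) = 1 := by rw [hcD]; field_simp
  have hsub : c * a - c * b = 1 - 1/D := by linarith
  have hadd : c^2 * a + c^2 * b = 1/D - (1/D)^2 := by linarith
  have hcd : c * D = 1/2 := by linarith [hc2]
  have h1D : (1:ℝ)/D = 2*c := by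
    rw [hcD]
    field_simp
  have hsqD : ((1:ℝ)/D)^2 = 4*c^2 := by rw [h1D]; ring
  have hc2D : c^2*D = c * (1/2) := by
    calc c^2*D = c*(c*D) := by ring
    _ = c*(1/2) := by rw [hcd]
  have e1 : c * ((a:ℝ) - b - (2*D - 2)) = 0 := by
    have expand : c * ((a:ℝ) - b - (2*D - 2)) = (c*a - c*b) - 2*(c*D) + 2*c := by ring
    rw [expand, hsub, hcd, h1D]; ring
  have e2 : c^2 * ((a:ℝ) + b - (4*D - 4)) = 0 := by
    have expand : c^2 * ((a:ℝ) + b - (4*D - 4)) = (c^2*a + c^2*b) - 4*(c^2*D) + 4*c^2 := by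
      ring
    rw [expand, hadd, hc2D, hsqD, h1D]; ring
  have h1 : (a:ℝ) - b = 2*D - 2 := by
    rcases mul_eq_zero.mp e1 with hcon | hok
    · exact absurd hcon (ne_of_gt hcpos)
    · linarith
  have h2 : (a:ℝ) + b = 4*D - 4 := by
    rcases mul_eq_zero.mp e2 with hcon | hok
    · exact absurd hcon (pow_ne_zero 2 (ne_of_gt hcpos))
    · linarith
  have haR : (a:ℝ) = 3 * D - 3 := by linarith only [h1, h2]
  have hbR : (b:ℝ) = D - 1 := by linarith only [h1, h2]
  -- conclude
  have h2pow : 1 ≤ 2^(k-1) := Nat.one_le_two_pow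
  constructor
  · have hsetA : {α : Fin n → ZMod 2 | fc f α = c} = ↑A := by
      ext α; simp [hA]
    rw [hsetA, Set.ncard_coe_finset, ← ha]
    have hcast : ((3 * (2^(k-1) - 1) : ℕ) : ℝ) = 3*D - 3 := by
      push_cast [Nat.cast_sub h2pow]
      rw [hD]
      try ring
    exact Nat.cast_inj.mp (haR.trans hcast.symm)
  · have hsetB : {β : Fin n → ZMod 2 | fc f β = -c} = ↑B := by
      ext β; simp [hB]
    rw [hsetB, Set.ncard_coe_finset, ← hb]
    have hcast : (((2^(k-1) - 1) : ℕ) : ℝ) = D - 1 := by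
      push_cast [Nat.cast_sub h2pow]
      rw [hD]
      try ring
    exact Nat.cast_inj.mp (hbR.trans hcast.symm)
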